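/- A commutative integral domain R has the property that every non-zero ideal of R has a serial factorization if and only if R is an h-local Prüfer domain, i.e., every non-zero element of R is contained in only finitely many maximal ideals of R, every non-zero prime ideal of R is contained in a unique maximal ideal of R, and for every maximal ideal M of R the localization R_M is a valuation domain. -/

import Mathlib

universe u

/-- A module is uniserial if its submodules are linearly ordered by inclusion. -/
def IsUniserialMod (S : Type*) [Ring S] (M : Type*) [AddCommGroup M] [Module S M] : Prop :=
  ∀ N P : Submodule S M, N ≤ P ∨ P ≤ N

/-- A finite family of ideals is coindependent if `Aᵢ + ⋂_{j ≠ i} Aⱼ = R` for every `i`. -/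
def CoindepC {R : Type u} [CommRing R] {n : ℕ} (A : Fin n → Ideal R) : Prop :=
  ∀ i, A i ⊔ (⨅ j, ⨅ (_ : j ≠ i), A j) = ⊤

/-- A serial factorization of an ideal `A` of a commutative ring `R`: a factorization
`A = A₁⋯Aₙ` into proper ideals forming a coindependent family with every `R/Aᵢ` a
uniserial `R`-module. -/
def IsSerialFactC {R : Type u} [CommRing R] {n : ℕ} (A : Ideal R) (F : Fin n → Ideal R) :
    Prop :=
  (∀ i, F i ≠ ⊤) ∧ CoindepC F ∧ (∀ i, IsUniserialMod R (R ⧸ F i)) ∧ A = ∏ i, F i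

section Aux

variable {R : Type u} [CommRing R]

/-- If `R ⧸ I` is uniserial then ideals containing `I` are linearly ordered. -/
lemma chain_of_uniserialMod {I : Ideal R} (h : IsUniserialMod R (R ⧸ I))
    (B C : Ideal R) (hB : I ≤ B) (hC : I ≤ C) : B ≤ C ∨ C ≤ B := by
  have key : ∀ D : Ideal R, I ≤ D → Submodule.comap I.mkQ (Submodule.map I.mkQ D) = D := by
    intro D hD
    rw [Submodule.comap_map_eq, Submodule.ker_mkQ, sup_eq_left.mpr hD]
  rcases h (Submodule.map I.mkQ B) (Submodule.map I.mkQ C) with hle | hle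
  · left; rw [← key B hB, ← key C hC]; exact Submodule.comap_mono hle
  · right; rw [← key B hB, ← key C hC]; exact Submodule.comap_mono hle

/-- Conversely, if ideals containing `I` are linearly ordered, `R ⧸ I` is uniserial. -/
lemma uniserialMod_of_chain {I : Ideal R}
    (h : ∀ B C : Ideal R, I ≤ B → I ≤ C → B ≤ C ∨ C ≤ B) :
    IsUniserialMod R (R ⧸ I) := by
  intro N P
  have hN : I ≤ Submodule.comap I.mkQ N := by
    intro x hx
    have : I.mkQ x = 0 := by
      simpa [Submodule.mkQ_apply] using (Submodule.Quotient.mk_eq_zero I).mpr hx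
    simp [Submodule.mem_comap, this]
  have hP : I ≤ Submodule.comap I.mkQ P := by
    intro x hx
    have : I.mkQ x = 0 := by
      simpa [Submodule.mkQ_apply] using (Submodule.Quotient.mk_eq_zero I).mpr hx
    simp [Submodule.mem_comap, this]
  rcases h _ _ hN hP with hle | hle
  · exact Or.inl ((Submodule.comap_le_comap_iff_of_surjective I.mkQ_surjective).mp hle)
  · exact Or.inr ((Submodule.comap_le_comap_iff_of_surjective I.mkQ_surjective).mp hle)

/-- The saturation of `A` at a prime `M`. -/
def satIdeal (A M : Ideal R) (hM : M.IsPrime) : Ideal R where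
  carrier := {x | ∃ s, s ∉ M ∧ s * x ∈ A}
  zero_mem' := ⟨1, fun h => hM.ne_top ((Ideal.eq_top_iff_one M).mpr h), by
    simpa using A.zero_mem⟩
  add_mem' := by
    rintro x y ⟨s, hs, hsx⟩ ⟨t, ht, hty⟩
    refine ⟨s * t, fun hmem => ((hM.mem_or_mem hmem).elim hs ht), ?_⟩
    have hE : s * t * (x + y) = t * (s * x) + s * (t * y) := by ring
    rw [hE]
    exact A.add_mem (A.mul_mem_left _ hsx) (A.mul_mem_left _ hty)
  smul_mem' := by
    rintro c x ⟨s, hs, hsx⟩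
    refine ⟨s, hs, ?_⟩
    rw [smul_eq_mul, show s * (c * x) = c * (s * x) by ring]
    exact A.mul_mem_left _ hsx

lemma mem_satIdeal {A M : Ideal R} {hM : M.IsPrime} {x : R} :
    x ∈ satIdeal A M hM ↔ ∃ s, s ∉ M ∧ s * x ∈ A := Iff.rfl

lemma le_satIdeal {A M : Ideal R} (hM : M.IsPrime) : A ≤ satIdeal A M hM := by
  intro x hx
  exact ⟨1, fun h => hM.ne_top ((Ideal.eq_top_iff_one M).mpr h), by simpa using hx⟩

lemma satIdeal_le {A M : Ideal R} (hM : M.IsPrime) (hAM : A ≤ M) : satIdeal A M hM ≤ M := by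
  rintro x ⟨s, hs, hsx⟩
  exact (hM.mem_or_mem (hAM hsx)).resolve_left hs

/-- If `P` is a minimal prime over `I` and `s ∈ P`, some `t ∉ P` has `t * s ^ k ∈ I`. -/
lemma exists_pow_mul_mem_of_minimalPrime {I P : Ideal R} (hP : P ∈ I.minimalPrimes)
    {s : R} (hs : s ∈ P) : ∃ (k : ℕ) (t : R), t ∉ P ∧ t * s ^ k ∈ I := by
  by_contra hcon
  push_neg at hcon
  have hPprime : P.IsPrime := hP.1.1
  have hone : (1 : R) ∉ P := fun h => hPprime.ne_top ((Ideal.eq_top_iff_one P).mpr h)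
  set W : Submonoid R :=
    { carrier := {x | ∃ k t, t ∉ P ∧ t * s ^ k = x}
      one_mem' := ⟨0, 1, hone, by simp⟩
      mul_mem' := by
        rintro x y ⟨k, t, ht, rfl⟩ ⟨l, u, hu, rfl⟩
        exact ⟨k + l, t * u, fun hm => ((hPprime.mem_or_mem hm).elim ht hu), by ring⟩ }
  have hdisj : Disjoint (I : Set R) (W : Set R) := by
    rw [Set.disjoint_left]
    rintro x hxI ⟨k, t, ht, rfl⟩
    exact hcon k t ht hxI
  obtain ⟨Q, hQprime, hIQ, hQdisj⟩ := Ideal.exists_le_prime_disjoint I W hdisj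
  have hQP : Q ≤ P := by
    intro x hxQ
    by_contra hxP
    exact Set.disjoint_left.mp hQdisj hxQ ⟨0, x, hxP, by simp⟩
  have hPQ : P ≤ Q := hP.2 ⟨hQprime, hIQ⟩ hQP
  exact Set.disjoint_left.mp hQdisj (hPQ hs) ⟨1, 1, hone, by simp⟩

/-- Product of pairwise comaximal ideals is their infimum. -/
lemma prod_eq_inf_of_pairwise {ι : Type*} [DecidableEq ι] (s : Finset ι) (F : ι → Ideal R)
    (h : ∀ i ∈ s, ∀ j ∈ s, i ≠ j → F i ⊔ F j = ⊤) : ∏ i ∈ s, F i = s.inf F := by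
  induction s using Finset.induction_on with
  | empty => simp [Ideal.one_eq_top]
  | insert a s ha ih =>
    have hcop : F a ⊔ ∏ i ∈ s, F i = ⊤ :=
      Ideal.sup_prod_eq_top fun j hj =>
        h a (Finset.mem_insert_self a s) j (Finset.mem_insert_of_mem hj)
          (fun he => ha (he ▸ hj))
    rw [Finset.prod_insert ha, Ideal.mul_eq_inf_of_coprime hcop, Finset.inf_insert,
      ih fun i hi j hj hij =>
        h i (Finset.mem_insert_of_mem hi) j (Finset.mem_insert_of_mem hj) hij]

lemma locMkSurjective {G : Type*} [CommMonoid G] (S : Submonoid G) (x : Localization S) :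
    ∃ y : G × S, Localization.mk y.1 y.2 = x :=
  Localization.induction_on x fun y => ⟨y, rfl⟩

end Aux

/-- Proposition (h-local): a commutative integral domain `R` has the property that every
non-zero ideal has a serial factorization iff `R` is an h-local Prüfer domain: every non-zero
element lies in only finitely many maximal ideals, every non-zero prime ideal lies in a unique
maximal ideal, and the localization at every maximal ideal is a valuation domain. -/
theorem statement17 {R : Type u} [CommRing R] [IsDomain R] :
    (∀ A : Ideal R, A ≠ ⊥ → ∃ (n : ℕ) (F : Fin n → Ideal R), IsSerialFactC A F) ↔
      ((∀ r : R, r ≠ 0 → {M : Ideal R | M.IsMaximal ∧ r ∈ M}.Finite) ∧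
       (∀ P : Ideal R, P.IsPrime → P ≠ ⊥ → ∃! M : Ideal R, M.IsMaximal ∧ P ≤ M) ∧
       (∀ (M : Ideal R) (hM : M.IsMaximal),
         ValuationRing (Localization (@Ideal.primeCompl R _ M hM.isPrime)))) := by
  constructor
  · intro H
    refine ⟨?_, ?_, ?_⟩
    · -- finitely many maximal ideals over a nonzero element
      intro r hr
      have hA : Ideal.span {r} ≠ (⊥ : Ideal R) := by
        simpa [Ideal.span_singleton_eq_bot] using hr
      obtain ⟨n, F, hne, hco, huni, hprod⟩ := H _ hA
      have hsub : {M : Ideal R | M.IsMaximal ∧ r ∈ M} ⊆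
          ⋃ i : Fin n, {M : Ideal R | M.IsMaximal ∧ F i ≤ M} := by
        rintro M ⟨hM, hrM⟩
        have hAM : Ideal.span {r} ≤ M := (Ideal.span_singleton_le_iff_mem _).mpr hrM
        obtain ⟨i, -, hi⟩ := (hM.isPrime.prod_le).mp (hprod ▸ hAM)
        exact Set.mem_iUnion.mpr ⟨i, hM, hi⟩
      refine Set.Finite.subset (Set.finite_iUnion fun i => ?_) hsub
      apply Set.Subsingleton.finite
      rintro M ⟨hM, hMi⟩ N ⟨hN, hNi⟩
      rcases chain_of_uniserialMod (huni i) M N hMi hNi with hle | hle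
      · exact hM.eq_of_le hN.ne_top hle
      · exact (hN.eq_of_le hM.ne_top hle).symm
    · -- unique maximal over a nonzero prime
      intro P hP hPbot
      obtain ⟨n, F, hne, hco, huni, hprod⟩ := H P hPbot
      obtain ⟨i, -, hiP⟩ := hP.prod_le.mp (le_of_eq hprod.symm)
      have hPi : P ≤ F i := le_trans (le_of_eq hprod)
        (Ideal.prod_le_inf.trans (Finset.inf_le (Finset.mem_univ i)))
      have hPeq : P = F i := le_antisymm hPi hiP
      obtain ⟨M, hMmax, hPM⟩ := Ideal.exists_le_maximal P hP.ne_top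
      refine ⟨M, ⟨hMmax, hPM⟩, ?_⟩
      rintro N ⟨hNmax, hPN⟩
      rcases chain_of_uniserialMod (huni i) N M (hPeq ▸ hPN) (hPeq ▸ hPM) with hle | hle
      · exact hNmax.eq_of_le hMmax.ne_top hle
      · exact (hMmax.eq_of_le hNmax.ne_top hle).symm
    · -- localizations are valuation rings
      intro M hM
      haveI := hM.isPrime
      have key : ∀ r r' : R, ∃ c : Localization M.primeCompl,
          algebraMap R (Localization M.primeCompl) r * c =
            algebraMap R (Localization M.primeCompl) r' ∨
          algebraMap R (Localization M.primeCompl) r' * c =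
            algebraMap R (Localization M.primeCompl) r := by
        intro r r'
        by_cases hr : r = 0
        · exact ⟨0, Or.inr (by simp [hr])⟩
        by_cases hr' : r' = 0
        · exact ⟨0, Or.inl (by simp [hr'])⟩
        by_cases hmem : r * r' ∈ M
        · set A := Ideal.span {r * r'} with hAdef
          have hA : A ≠ ⊥ := by
            simpa [hAdef, Ideal.span_singleton_eq_bot] using mul_ne_zero hr hr'
          obtain ⟨n, F, hne, hco, huni, hprod⟩ := H A hA
          have hAM : A ≤ M := (Ideal.span_singleton_le_iff_mem _).mpr hmem
          obtain ⟨i, -, hiM⟩ := hM.isPrime.prod_le.mp (hprod ▸ hAM)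
          have hnotle : ∀ j, j ≠ i → ¬ F j ≤ M := by
            intro j hj hle
            have h1 : (⨅ k, ⨅ (_ : k ≠ j), F k) ≤ F i := le_trans (iInf_le _ i)
              (iInf_le _ (fun he => hj he.symm))
            have h2 : (⊤ : Ideal R) ≤ M := by
              rw [← hco j]
              exact sup_le hle (h1.trans hiM)
            exact hM.ne_top (top_le_iff.mp h2)
          have hex : ∀ j : Fin n, ∃ t : R, j ≠ i → (t ∈ F j ∧ t ∉ M) := by
            intro j
            by_cases hj : j = i
            · exact ⟨1, fun h => absurd hj h⟩
            · obtain ⟨t, ht, htM⟩ := SetLike.not_le_iff_exists.mp (hnotle j hj)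
              exact ⟨t, fun _ => ⟨ht, htM⟩⟩
          choose t ht using hex
          set s : R := ∏ j ∈ Finset.univ.erase i, t j with hsdef
          have hsM : s ∉ M := by
            have : s ∈ M.primeCompl := Submonoid.prod_mem _ fun j hj =>
              (ht j (Finset.ne_of_mem_erase hj)).2
            exact this
          have hsF : s ∈ ∏ j ∈ Finset.univ.erase i, F j :=
            Ideal.prod_mem_prod fun j hj => (ht j (Finset.ne_of_mem_erase hj)).1
          have hmulerase : F i * ∏ j ∈ Finset.univ.erase i, F j = ∏ j, F j :=
            Finset.mul_prod_erase Finset.univ F (Finset.mem_univ i)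
          rcases chain_of_uniserialMod (huni i) (Ideal.span {r} ⊔ F i)
              (Ideal.span {r'} ⊔ F i) le_sup_right le_sup_right with hle | hle
          · -- r ∈ span{r'} ⊔ F i  ⟹  r'/1 divides r/1
            have hrmem : r ∈ Ideal.span {r'} ⊔ F i :=
              hle (Submodule.mem_sup_left (Ideal.mem_span_singleton_self r))
            obtain ⟨u, hu, y, hy, huy⟩ := Submodule.mem_sup.mp hrmem
            obtain ⟨q, hq⟩ := Ideal.mem_span_singleton'.mp hu
            have hys : y * s ∈ A := by
              have hmm : y * s ∈ F i * ∏ j ∈ Finset.univ.erase i, F j :=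
                Ideal.mul_mem_mul hy hsF
              rw [hmulerase, ← hprod] at hmm
              exact hmm
            obtain ⟨v, hv⟩ := Ideal.mem_span_singleton'.mp hys
            have hkey : r * s = r' * (q * s + r * v) := by
              linear_combination -s * huy - s * hq - hv
            refine ⟨Localization.mk (q * s + r * v) ⟨s, hsM⟩, Or.inr ?_⟩
            rw [← Localization.mk_one_eq_algebraMap, ← Localization.mk_one_eq_algebraMap,
              Localization.mk_mul, Localization.mk_eq_mk_iff, Localization.r_iff_exists]
            refine ⟨1, ?_⟩
            simp only [OneMemClass.coe_one, one_mul, Submonoid.coe_mul]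
            linear_combination -hkey
          · -- r' ∈ span{r} ⊔ F i  ⟹  r/1 divides r'/1
            have hrmem : r' ∈ Ideal.span {r} ⊔ F i :=
              hle (Submodule.mem_sup_left (Ideal.mem_span_singleton_self r'))
            obtain ⟨u, hu, y, hy, huy⟩ := Submodule.mem_sup.mp hrmem
            obtain ⟨q, hq⟩ := Ideal.mem_span_singleton'.mp hu
            have hys : y * s ∈ A := by
              have hmm : y * s ∈ F i * ∏ j ∈ Finset.univ.erase i, F j :=
                Ideal.mul_mem_mul hy hsF
              rw [hmulerase, ← hprod] at hmm
              exact hmm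
            obtain ⟨v, hv⟩ := Ideal.mem_span_singleton'.mp hys
            have hkey : r' * s = r * (q * s + r' * v) := by
              linear_combination -s * huy - s * hq - hv
            refine ⟨Localization.mk (q * s + r' * v) ⟨s, hsM⟩, Or.inl ?_⟩
            rw [← Localization.mk_one_eq_algebraMap, ← Localization.mk_one_eq_algebraMap,
              Localization.mk_mul, Localization.mk_eq_mk_iff, Localization.r_iff_exists]
            refine ⟨1, ?_⟩
            simp only [OneMemClass.coe_one, one_mul, Submonoid.coe_mul]
            linear_combination -hkey
        · -- r * r' ∉ M : then r' is a unit in the localization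
          have hr'M : r' ∉ M := fun h => hmem (M.mul_mem_left r h)
          have hu := IsLocalization.map_units (Localization M.primeCompl)
            (⟨r', hr'M⟩ : M.primeCompl)
          obtain ⟨w, hw⟩ := hu.exists_right_inv
          refine ⟨w * algebraMap R (Localization M.primeCompl) r, Or.inr ?_⟩
          rw [← mul_assoc, hw, one_mul]
      have pre : PreValuationRing (Localization M.primeCompl) := by
        constructor
        intro a b
        obtain ⟨⟨ra, sa⟩, rfl⟩ := locMkSurjective _ a
        obtain ⟨⟨rb, sb⟩, rfl⟩ := locMkSurjective _ b
        obtain ⟨c, hc | hc⟩ := key ra rb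
        · refine ⟨Localization.mk (sa : R) sb * c, Or.inl ?_⟩
          have h1 : Localization.mk ra sa * Localization.mk (sa : R) sb =
              Localization.mk ra sb := by
            rw [Localization.mk_mul, Localization.mk_eq_mk_iff, Localization.r_iff_exists]
            exact ⟨1, by simp only [OneMemClass.coe_one, one_mul, Submonoid.coe_mul]; ring⟩
          have h2 : Localization.mk ra sb = algebraMap R _ ra * Localization.mk 1 sb := by
            rw [← Localization.mk_one_eq_algebraMap, Localization.mk_mul, mul_one, one_mul]
          have h3 : Localization.mk rb sb = algebraMap R _ rb * Localization.mk 1 sb := by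
            rw [← Localization.mk_one_eq_algebraMap, Localization.mk_mul, mul_one, one_mul]
          calc Localization.mk ra sa * (Localization.mk (sa : R) sb * c)
              = (Localization.mk ra sa * Localization.mk (sa : R) sb) * c := by ring
            _ = Localization.mk ra sb * c := by rw [h1]
            _ = (algebraMap R _ ra * c) * Localization.mk 1 sb := by rw [h2]; ring
            _ = algebraMap R _ rb * Localization.mk 1 sb := by rw [hc]
            _ = Localization.mk rb sb := h3.symm
        · refine ⟨Localization.mk (sb : R) sa * c, Or.inr ?_⟩
          have h1 : Localization.mk rb sb * Localization.mk (sb : R) sa =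
              Localization.mk rb sa := by
            rw [Localization.mk_mul, Localization.mk_eq_mk_iff, Localization.r_iff_exists]
            exact ⟨1, by simp only [OneMemClass.coe_one, one_mul, Submonoid.coe_mul]; ring⟩
          have h2 : Localization.mk rb sa = algebraMap R _ rb * Localization.mk 1 sa := by
            rw [← Localization.mk_one_eq_algebraMap, Localization.mk_mul, mul_one, one_mul]
          have h3 : Localization.mk ra sa = algebraMap R _ ra * Localization.mk 1 sa := by
            rw [← Localization.mk_one_eq_algebraMap, Localization.mk_mul, mul_one, one_mul]
          calc Localization.mk rb sb * (Localization.mk (sb : R) sa * c)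
              = (Localization.mk rb sb * Localization.mk (sb : R) sa) * c := by ring
            _ = Localization.mk rb sa * c := by rw [h1]
            _ = (algebraMap R _ rb * c) * Localization.mk 1 sa := by rw [h2]; ring
            _ = algebraMap R _ ra * Localization.mk 1 sa := by rw [hc]
            _ = Localization.mk ra sa := h3.symm
      exact @ValuationRing.mk _ _ _ pre
  · -- h-local Prüfer implies serial factorizations
    rintro ⟨h1, h2, h3⟩ A hA
    by_cases htop : A = ⊤
    · refine ⟨0, fun i => i.elim0, fun i => i.elim0, fun i => i.elim0, fun i => i.elim0, ?_⟩
      simp [htop, Ideal.one_eq_top]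
    obtain ⟨a, haA, ha0⟩ := (Submodule.ne_bot_iff A).mp hA
    have hSfin : {M : Ideal R | M.IsMaximal ∧ A ≤ M}.Finite :=
      (h1 a ha0).subset fun M hM => ⟨hM.1, hM.2 haA⟩
    set T := hSfin.toFinset with hTdef
    set n := T.card with hndef
    set e := T.equivFin with hedef
    set Mi : Fin n → Ideal R := fun i => ((e.symm i : T) : Ideal R) with hMidef
    have hMi_mem : ∀ i, (Mi i).IsMaximal ∧ A ≤ Mi i := by
      intro i
      have := (e.symm i).2
      rw [hSfin.mem_toFinset] at this
      exact this
    have hMimax : ∀ i, (Mi i).IsMaximal := fun i => (hMi_mem i).1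
    have hAMi : ∀ i, A ≤ Mi i := fun i => (hMi_mem i).2
    have hMiinj : Function.Injective Mi := by
      intro i j hij
      have : e.symm i = e.symm j := Subtype.ext hij
      exact e.symm.injective this
    set F : Fin n → Ideal R := fun i => satIdeal A (Mi i) (hMimax i).isPrime with hFdef
    have hAF : ∀ i, A ≤ F i := fun i => le_satIdeal _
    have hFMi : ∀ i, F i ≤ Mi i := fun i => satIdeal_le _ (hAMi i)
    -- every maximal ideal containing `F i` equals `Mi i`
    have hLmax : ∀ i (N : Ideal R), N.IsMaximal → F i ≤ N → N = Mi i := by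
      intro i N hN hFN
      haveI := hN.isPrime
      obtain ⟨P, hPmin, hPN⟩ := Ideal.exists_minimalPrimes_le hFN
      have hPprime : P.IsPrime := hPmin.1.1
      have hFP : F i ≤ P := hPmin.1.2
      have hPbot : P ≠ ⊥ := by
        intro h
        exact ha0 ((Submodule.mem_bot R).mp (h ▸ hFP (hAF i haA)))
      have hPM : P ≤ Mi i := by
        intro s hs
        by_contra hsM
        obtain ⟨k, tt, htP, htk⟩ := exists_pow_mul_mem_of_minimalPrime hPmin hs
        obtain ⟨u, huM, hu⟩ := (mem_satIdeal).mp htk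
        have husk : u * s ^ k ∉ Mi i := by
          intro hmemu
          rcases (hMimax i).isPrime.mem_or_mem hmemu with h | h
          · exact huM h
          · exact hsM ((hMimax i).isPrime.mem_of_pow_mem k h)
        have hmemA : (u * s ^ k) * tt ∈ A := by
          rw [show (u * s ^ k) * tt = u * (tt * s ^ k) by ring]
          exact hu
        exact htP (hFP ((mem_satIdeal).mpr ⟨u * s ^ k, husk, hmemA⟩))
      obtain ⟨Mx, _, hMxuniq⟩ := h2 P hPprime hPbot
      exact (hMxuniq N ⟨hN, hPN⟩).trans (hMxuniq (Mi i) ⟨hMimax i, hPM⟩).symm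
    -- ideals above `F i` are saturated at `Mi i`
    have hsat : ∀ i (B : Ideal R), F i ≤ B → ∀ s x : R, s ∉ Mi i → s * x ∈ B → x ∈ B := by
      intro i B hFB s x hsM hsx
      have hsup : Ideal.span {s} ⊔ B = ⊤ := by
        by_contra hne
        obtain ⟨N, hNmax, hleN⟩ := Ideal.exists_le_maximal _ hne
        have hNMi : N = Mi i := hLmax i N hNmax (hFB.trans (le_sup_right.trans hleN))
        exact hsM (hNMi ▸ hleN (Submodule.mem_sup_left (Ideal.mem_span_singleton_self s)))
      obtain ⟨y, hy, z, hz, hyz⟩ := Submodule.mem_sup.mp ((Ideal.eq_top_iff_one _).mp hsup)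
      obtain ⟨c, hc⟩ := Ideal.mem_span_singleton'.mp hy
      have hx : x = c * (s * x) + x * z := by linear_combination -x * hyz - x * hc
      rw [hx]
      exact B.add_mem (B.mul_mem_left _ hsx) (B.mul_mem_left _ hz)
    -- ideals above `F i` form a chain
    have hchain : ∀ i (B C : Ideal R), F i ≤ B → F i ≤ C → B ≤ C ∨ C ≤ B := by
      intro i B C hB hC
      by_cases hBC : B ≤ C
      · exact Or.inl hBC
      right
      obtain ⟨b, hbB, hbC⟩ := SetLike.not_le_iff_exists.mp hBC
      intro c hcC
      haveI := (hMimax i).isPrime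
      haveI : ValuationRing (Localization (Mi i).primeCompl) := h3 (Mi i) (hMimax i)
      obtain ⟨d, hd | hd⟩ := ValuationRing.cond
        (algebraMap R (Localization (Mi i).primeCompl) b)
        (algebraMap R (Localization (Mi i).primeCompl) c)
      · obtain ⟨⟨tt, ss⟩, rfl⟩ := locMkSurjective _ d
        rw [← Localization.mk_one_eq_algebraMap, ← Localization.mk_one_eq_algebraMap,
          Localization.mk_mul, Localization.mk_eq_mk_iff, Localization.r_iff_exists] at hd
        obtain ⟨w, hw⟩ := hd
        simp only [OneMemClass.coe_one, one_mul, Submonoid.coe_mul] at hw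
        have hw0 : (w : R) ≠ 0 := fun h => w.2 (h ▸ (Mi i).zero_mem)
        have hbt : b * tt = (ss : R) * c := by
          apply mul_left_cancel₀ hw0
          linear_combination hw
        have : (ss : R) * c ∈ B := hbt ▸ B.mul_mem_right tt hbB
        exact hsat i B hB ss c ss.2 this
      · obtain ⟨⟨tt, ss⟩, rfl⟩ := locMkSurjective _ d
        rw [← Localization.mk_one_eq_algebraMap, ← Localization.mk_one_eq_algebraMap,
          Localization.mk_mul, Localization.mk_eq_mk_iff, Localization.r_iff_exists] at hd
        obtain ⟨w, hw⟩ := hd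
        simp only [OneMemClass.coe_one, one_mul, Submonoid.coe_mul] at hw
        have hw0 : (w : R) ≠ 0 := fun h => w.2 (h ▸ (Mi i).zero_mem)
        have hct : c * tt = (ss : R) * b := by
          apply mul_left_cancel₀ hw0
          linear_combination hw
        have : (ss : R) * b ∈ C := hct ▸ C.mul_mem_right tt hcC
        exact (hbC (hsat i C hC ss b ss.2 this)).elim
    -- assembled facts
    have hne_top : ∀ i, F i ≠ ⊤ := by
      intro i heq
      exact (hMimax i).ne_top (top_le_iff.mp (heq ▸ hFMi i))
    have hpair : ∀ i j, i ≠ j → F i ⊔ F j = ⊤ := by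
      intro i j hij
      by_contra hne
      obtain ⟨N, hNmax, hleN⟩ := Ideal.exists_le_maximal _ hne
      have e1 := hLmax i N hNmax (le_sup_left.trans hleN)
      have e2 := hLmax j N hNmax (le_sup_right.trans hleN)
      exact hij (hMiinj (e1 ▸ e2 ▸ rfl))
    have hco : CoindepC F := by
      intro i
      by_contra hne
      obtain ⟨N, hNmax, hleN⟩ := Ideal.exists_le_maximal _ hne
      have hNi : N = Mi i := hLmax i N hNmax (le_sup_left.trans hleN)
      have hprodle : (∏ j ∈ Finset.univ.erase i, F j) ≤ N := by
        refine le_trans ?_ (le_sup_right.trans hleN)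
        refine le_iInf fun j => le_iInf fun hj => ?_
        exact Ideal.prod_le_inf.trans (Finset.inf_le (Finset.mem_erase.mpr ⟨hj, Finset.mem_univ j⟩))
      obtain ⟨j, hjmem, hjle⟩ := hNmax.isPrime.prod_le.mp hprodle
      have hNj : N = Mi j := hLmax j N hNmax hjle
      exact (Finset.mem_erase.mp hjmem).1 (hMiinj (hNj ▸ hNi ▸ rfl))
    have huni : ∀ i, IsUniserialMod R (R ⧸ F i) := fun i =>
      uniserialMod_of_chain (hchain i)
    have hcover : ∀ N : Ideal R, N.IsMaximal → A ≤ N → ∃ i, Mi i = N := by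
      intro N hN hAN
      refine ⟨e ⟨N, hSfin.mem_toFinset.mpr ⟨hN, hAN⟩⟩, ?_⟩
      simp [hMidef]
    have hprodeq : A = ∏ i, F i := by
      have hprodinf : ∏ i, F i = Finset.univ.inf F :=
        prod_eq_inf_of_pairwise _ _ fun i _ j _ hij => hpair i j hij
      rw [hprodinf]
      apply le_antisymm
      · exact Finset.le_inf fun i _ => hAF i
      · intro x hx
        have hxi : ∀ i, x ∈ F i := fun i => (Finset.inf_le (Finset.mem_univ i) : Finset.univ.inf F ≤ F i) hx
        have hcolon : A.colon (Ideal.span {x}) = ⊤ := by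
          by_contra hne
          obtain ⟨N, hNmax, hleN⟩ := Ideal.exists_le_maximal _ hne
          by_cases hAN : A ≤ N
          · obtain ⟨i, hi⟩ := hcover N hNmax hAN
            obtain ⟨s, hsM, hsx⟩ := (mem_satIdeal).mp (hxi i)
            have hscolon : s ∈ A.colon (Ideal.span {x}) :=
              Ideal.mem_colon_span_singleton.mpr hsx
            exact (hi ▸ hsM) (hleN hscolon)
          · obtain ⟨sa, hsaA, hsaN⟩ := SetLike.not_le_iff_exists.mp hAN
            have hscolon : sa ∈ A.colon (Ideal.span {x}) :=
              Ideal.mem_colon_span_singleton.mpr (A.mul_mem_right x hsaA)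
            exact hsaN (hleN hscolon)
        have hone : (1 : R) ∈ A.colon (Ideal.span {x}) := hcolon ▸ Submodule.mem_top
        simpa using Ideal.mem_colon_span_singleton.mp hone
    exact ⟨n, F, hne_top, hco, huni, hprodeq⟩
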